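/- Let α > 0, 0 < β < α/3, M > 0 be reals and let ℓ ≥ 2 and d with 0 ≤ d < ℓ be integers. If (j,k) and (j',k') are points of the lattice 𝕃 = {(j,k) ∈ ℤ² : k ≥ 0 and j+k is even} with ‖(j,k)−(j',k')‖ := (|j−j'|+|k−k'|)/2 > 1 (equivalently |j−j'|+|k−k'| > 2), then the regions Y_jk and Y_{j'k'} are disjoint. -/

import Mathlib

open Set

/-- The wedge `W(a_l, a_r, M) = {(x,t) : t ≥ 0, a_l t ≤ x ≤ M + a_r t}` as a subset of `ℝ²`. -/
def wedge (al ar M : ℝ) : Set (ℝ × ℝ) :=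
  {p | 0 ≤ p.2 ∧ al * p.2 ≤ p.1 ∧ p.1 ≤ M + ar * p.2}

/-- Translate a subset of `ℝ²` by a vector. -/
def shiftSet (v : ℝ × ℝ) (S : Set (ℝ × ℝ)) : Set (ℝ × ℝ) :=
  (fun p => v + p) '' S

/-- The large left parallelogram `L00`. -/
def bigL (α β M : ℝ) : Set (ℝ × ℝ) :=
  {p | 0 ≤ p.2 ∧ p.2 ≤ M * (1 + β / α) ∧
    M * β / 2 ≤ p.1 + α * p.2 ∧ p.1 + α * p.2 ≤ 3 * M * β / 2}

/-- The large right parallelogram `R00`. -/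
def bigR (α β M : ℝ) : Set (ℝ × ℝ) :=
  {p | 0 ≤ p.2 ∧ p.2 ≤ M * (1 + β / α) ∧
    -(3 * M * β / 2) ≤ p.1 - α * p.2 ∧ p.1 - α * p.2 ≤ -(M * β / 2)}

/-- The small left parallelogram `L00small`. -/
def smallL (α β M : ℝ) : Set (ℝ × ℝ) :=
  {p | 0 ≤ p.2 ∧ p.2 ≤ 3 * M * β / (2 * α) ∧
    M * β / 2 ≤ p.1 + α * p.2 ∧ p.1 + α * p.2 ≤ 3 * M * β / 2}

/-- The small right parallelogram `R00small`. -/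
def smallR (α β M : ℝ) : Set (ℝ × ℝ) :=
  {p | 0 ≤ p.2 ∧ p.2 ≤ 3 * M * β / (2 * α) ∧
    -(3 * M * β / 2) ≤ p.1 - α * p.2 ∧ p.1 - α * p.2 ≤ -(M * β / 2)}

/-- The translation vector `v_jk = (M j (α−β), M k)`. -/
def vjk (α β M : ℝ) (j k : ℤ) : ℝ × ℝ := (M * (j : ℝ) * (α - β), M * (k : ℝ))

def Ljk (α β M : ℝ) (j k : ℤ) : Set (ℝ × ℝ) := shiftSet (vjk α β M j k) (bigL α β M)
def Rjk (α β M : ℝ) (j k : ℤ) : Set (ℝ × ℝ) := shiftSet (vjk α β M j k) (bigR α β M)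
def Lsjk (α β M : ℝ) (j k : ℤ) : Set (ℝ × ℝ) := shiftSet (vjk α β M j k) (smallL α β M)
def Rsjk (α β M : ℝ) (j k : ℤ) : Set (ℝ × ℝ) := shiftSet (vjk α β M j k) (smallR α β M)

/-- The region `Y00` built from `ℓ` big right parallelograms with small left connectors and
two branches of big left parallelograms with small right connectors. -/
def Y00 (α β M : ℝ) (ℓ d : ℤ) : Set (ℝ × ℝ) :=
  bigR α β M ∪
  (⋃ i ∈ Finset.Icc (1 : ℤ) ℓ, (Rjk α β M i i ∪ Lsjk α β M i i)) ∪
  Ljk α β M ℓ ℓ ∪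
  (if 1 ≤ d then Ljk α β M (ℓ + 1) (ℓ + 1) else ∅) ∪
  (if d = 1 then Ljk α β M (ℓ - 1) (ℓ + 1) ∪ Rsjk α β M (ℓ - 1) (ℓ + 1) else ∅) ∪
  (if 2 ≤ d then
    (⋃ i ∈ Finset.Ico (0 : ℤ) d,
      (Ljk α β M (ℓ - i) (ℓ + i) ∪ Rsjk α β M (ℓ - i) (ℓ + i) ∪
        Ljk α β M (ℓ + 1 - i) (ℓ + 1 + i) ∪ Rsjk α β M (ℓ + 1 - i) (ℓ + 1 + i))) ∪
    Ljk α β M (ℓ - d) (ℓ + d) ∪ Rsjk α β M (ℓ - d) (ℓ + d)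
  else ∅)

/-- The shiftSet `Y_jk` of `Y00`. -/
def Yjk (α β M : ℝ) (ℓ d j k : ℤ) : Set (ℝ × ℝ) :=
  shiftSet (M * ((k * (ℓ - d) + j : ℤ) : ℝ) * (α - β), M * (k : ℝ) * ((ℓ + d + 1 : ℤ) : ℝ))
    (Y00 α β M ℓ d)

/-- The full region `Y(ℓ,d,M) = ⋃_{(j,k) ∈ 𝕃, −k ≤ j ≤ k} Y_jk`. -/
def Yreg (α β M : ℝ) (ℓ d : ℤ) : Set (ℝ × ℝ) :=
  ⋃ (j : ℤ) (k : ℤ) (_ : 0 ≤ k ∧ Even (j + k) ∧ -k ≤ j ∧ j ≤ k), Yjk α β M ℓ d j k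

-- ===== auxiliary lemmas =====


lemma shift_shift (v w : ℝ × ℝ) (S : Set (ℝ × ℝ)) :
    shiftSet v (shiftSet w S) = shiftSet (v + w) S := by
  unfold shiftSet
  rw [Set.image_image]
  simp [add_assoc]

lemma vjk_add (α β M : ℝ) (A B a b : ℤ) :
    vjk α β M A B + vjk α β M a b = vjk α β M (A + a) (B + b) := by
  simp only [vjk, Prod.mk_add_mk, Prod.mk.injEq]
  constructor <;> push_cast <;> ring

lemma shift_Ljk (α β M : ℝ) (A B a b : ℤ) :
    shiftSet (vjk α β M A B) (Ljk α β M a b) = Ljk α β M (A + a) (B + b) := by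
  rw [Ljk, shift_shift, vjk_add, Ljk]

lemma shift_Rjk (α β M : ℝ) (A B a b : ℤ) :
    shiftSet (vjk α β M A B) (Rjk α β M a b) = Rjk α β M (A + a) (B + b) := by
  rw [Rjk, shift_shift, vjk_add, Rjk]

lemma shift_Lsjk (α β M : ℝ) (A B a b : ℤ) :
    shiftSet (vjk α β M A B) (Lsjk α β M a b) = Lsjk α β M (A + a) (B + b) := by
  rw [Lsjk, shift_shift, vjk_add, Lsjk]

lemma shift_Rsjk (α β M : ℝ) (A B a b : ℤ) :
    shiftSet (vjk α β M A B) (Rsjk α β M a b) = Rsjk α β M (A + a) (B + b) := by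
  rw [Rsjk, shift_shift, vjk_add, Rsjk]

lemma smallL_subset (α β M : ℝ) (hα : 0 < α) (hβ0 : 0 < β) (hβ : β < α / 3) (hM : 0 < M) :
    smallL α β M ⊆ bigL α β M := by
  rintro p ⟨h1, h2, h3, h4⟩
  have hβα : β / α < 1 := by rw [div_lt_one hα]; linarith
  have key : 3 * M * β / (2 * α) ≤ M * (1 + β / α) := by
    have e1 : 3 * M * β / (2 * α) = M * (β / α) * (3 / 2) := by
      field_simp
    have e2 : M * (1 + β / α) = M + M * (β / α) := by ring
    nlinarith [mul_pos hM (div_pos hβ0 hα)]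
  exact ⟨h1, le_trans h2 key, h3, h4⟩

lemma smallR_subset (α β M : ℝ) (hα : 0 < α) (hβ0 : 0 < β) (hβ : β < α / 3) (hM : 0 < M) :
    smallR α β M ⊆ bigR α β M := by
  rintro p ⟨h1, h2, h3, h4⟩
  have hβα : β / α < 1 := by rw [div_lt_one hα]; linarith
  have key : 3 * M * β / (2 * α) ≤ M * (1 + β / α) := by
    have e1 : 3 * M * β / (2 * α) = M * (β / α) * (3 / 2) := by
      field_simp
    have e2 : M * (1 + β / α) = M + M * (β / α) := by ring
    nlinarith [mul_pos hM (div_pos hβ0 hα)]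
  exact ⟨h1, le_trans h2 key, h3, h4⟩

lemma Lsjk_subset (α β M : ℝ) (hα : 0 < α) (hβ0 : 0 < β) (hβ : β < α / 3) (hM : 0 < M)
    (a b : ℤ) : Lsjk α β M a b ⊆ Ljk α β M a b :=
  Set.image_mono (smallL_subset α β M hα hβ0 hβ hM)

lemma Rsjk_subset (α β M : ℝ) (hα : 0 < α) (hβ0 : 0 < β) (hβ : β < α / 3) (hM : 0 < M)
    (a b : ℤ) : Rsjk α β M a b ⊆ Rjk α β M a b :=
  Set.image_mono (smallR_subset α β M hα hβ0 hβ hM)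

-- normalized membership facts
lemma norm_L {α β M : ℝ} (hα : 0 < α) (hM : 0 < M) {a b : ℤ} {p : ℝ × ℝ}
    (h : p ∈ Ljk α β M a b) :
    (b : ℝ) ≤ p.2 / M ∧ p.2 / M ≤ (b : ℝ) + 1 + β / α ∧
    (a : ℝ) * (α - β) + α * b + β / 2 ≤ (p.1 + α * p.2) / M ∧
    (p.1 + α * p.2) / M ≤ (a : ℝ) * (α - β) + α * b + 3 * β / 2 := by
  obtain ⟨q, ⟨h1, h2, h3, h4⟩, rfl⟩ := h
  simp only [vjk, Prod.fst_add, Prod.snd_add]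
  refine ⟨?_, ?_, ?_, ?_⟩
  · rw [le_div_iff₀ hM]; linarith
  · rw [div_le_iff₀ hM]; nlinarith
  · rw [le_div_iff₀ hM]; nlinarith
  · rw [div_le_iff₀ hM]; nlinarith

lemma norm_R {α β M : ℝ} (hα : 0 < α) (hM : 0 < M) {a b : ℤ} {p : ℝ × ℝ}
    (h : p ∈ Rjk α β M a b) :
    (b : ℝ) ≤ p.2 / M ∧ p.2 / M ≤ (b : ℝ) + 1 + β / α ∧
    (a : ℝ) * (α - β) - α * b - 3 * β / 2 ≤ (p.1 - α * p.2) / M ∧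
    (p.1 - α * p.2) / M ≤ (a : ℝ) * (α - β) - α * b - β / 2 := by
  obtain ⟨q, ⟨h1, h2, h3, h4⟩, rfl⟩ := h
  simp only [vjk, Prod.fst_add, Prod.snd_add]
  refine ⟨?_, ?_, ?_, ?_⟩
  · rw [le_div_iff₀ hM]; linarith
  · rw [div_le_iff₀ hM]; nlinarith
  · rw [le_div_iff₀ hM]; nlinarith
  · rw [div_le_iff₀ hM]; nlinarith

-- ===== contact core lemmas (normalized coordinates) =====
section Core
variable {α β : ℝ} {a b a' b' : ℤ} {s u w : ℝ}

/-- Two big L-windows sharing a point: allowed offsets. -/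
lemma core_LL (hα : 0 < α) (hβ0 : 0 < β) (hβ : β < α / 3)
    (hb1 : (b : ℝ) ≤ s) (hb2 : s ≤ (b : ℝ) + 1 + β / α)
    (hu1 : (a : ℝ) * (α - β) + α * b + β / 2 ≤ u)
    (hu2 : u ≤ (a : ℝ) * (α - β) + α * b + 3 * β / 2)
    (hb1' : (b' : ℝ) ≤ s) (hb2' : s ≤ (b' : ℝ) + 1 + β / α)
    (hu1' : (a' : ℝ) * (α - β) + α * b' + β / 2 ≤ u)
    (hu2' : u ≤ (a' : ℝ) * (α - β) + α * b' + 3 * β / 2) :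
    (a - a' = 0 ∧ b - b' = 0) ∨ (a - a' = 1 ∧ b - b' = -1) ∨
      (a - a' = -1 ∧ b - b' = 1) := by
  have hβα : β / α < 1 := by rw [div_lt_one hα]; linarith
  have hab : (0 : ℝ) < α - β := by linarith
  have hm : ∀ x y : ℤ, x ≤ y → (x : ℝ) * (α - β) ≤ (y : ℝ) * (α - β) := fun x y h =>
    mul_le_mul_of_nonneg_right (by exact_mod_cast h) hab.le
  have hdb : b - b' = -1 ∨ b - b' = 0 ∨ b - b' = 1 := by
    have c1 : (b : ℝ) < (b' : ℝ) + 2 := by linarith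
    have c2 : (b' : ℝ) < (b : ℝ) + 2 := by linarith
    have c1' : b < b' + 2 := by exact_mod_cast c1
    have c2' : b' < b + 2 := by exact_mod_cast c2
    omega
  rcases hdb with h | h | h
  · -- b' = b + 1, partner must be a = a' + 1
    refine Or.inr (Or.inl ⟨?_, by omega⟩)
    by_contra hne
    have hα2 : α * (b' : ℝ) = α * (b : ℝ) + α := by
      have e : (b' : ℝ) = (b : ℝ) + 1 := by exact_mod_cast (by omega : b' = b + 1)
      rw [e]; ring
    rcases (by omega : a ≤ a' ∨ a' + 2 ≤ a) with hc | hc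
    · have := hm a a' hc; linarith
    · have := hm (a' + 2) a hc; push_cast at this; linarith
  · refine Or.inl ⟨?_, by omega⟩
    by_contra hne
    have hαb : α * (b' : ℝ) = α * (b : ℝ) := by
      have e : (b' : ℝ) = (b : ℝ) := by exact_mod_cast (by omega : b' = b)
      rw [e]
    rcases (by omega : a + 1 ≤ a' ∨ a' + 1 ≤ a) with hc | hc
    · have := hm (a + 1) a' hc; push_cast at this; linarith
    · have := hm (a' + 1) a hc; push_cast at this; linarith
  · -- b = b' + 1, partner must be a' = a + 1
    refine Or.inr (Or.inr ⟨?_, by omega⟩)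
    by_contra hne
    have hα2 : α * (b : ℝ) = α * (b' : ℝ) + α := by
      have e : (b : ℝ) = (b' : ℝ) + 1 := by exact_mod_cast (by omega : b = b' + 1)
      rw [e]; ring
    rcases (by omega : a' ≤ a ∨ a + 2 ≤ a') with hc | hc
    · have := hm a' a hc; linarith
    · have := hm (a + 2) a' hc; push_cast at this; linarith

/-- Two big R-windows sharing a point: allowed offsets. -/
lemma core_RR (hα : 0 < α) (hβ0 : 0 < β) (hβ : β < α / 3)
    (hb1 : (b : ℝ) ≤ s) (hb2 : s ≤ (b : ℝ) + 1 + β / α)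
    (hw1 : (a : ℝ) * (α - β) - α * b - 3 * β / 2 ≤ w)
    (hw2 : w ≤ (a : ℝ) * (α - β) - α * b - β / 2)
    (hb1' : (b' : ℝ) ≤ s) (hb2' : s ≤ (b' : ℝ) + 1 + β / α)
    (hw1' : (a' : ℝ) * (α - β) - α * b' - 3 * β / 2 ≤ w)
    (hw2' : w ≤ (a' : ℝ) * (α - β) - α * b' - β / 2) :
    (a - a' = 0 ∧ b - b' = 0) ∨ (a - a' = 1 ∧ b - b' = 1) ∨
      (a - a' = -1 ∧ b - b' = -1) := by
  have hβα : β / α < 1 := by rw [div_lt_one hα]; linarith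
  have hab : (0 : ℝ) < α - β := by linarith
  have hm : ∀ x y : ℤ, x ≤ y → (x : ℝ) * (α - β) ≤ (y : ℝ) * (α - β) := fun x y h =>
    mul_le_mul_of_nonneg_right (by exact_mod_cast h) hab.le
  have hdb : b - b' = -1 ∨ b - b' = 0 ∨ b - b' = 1 := by
    have c1 : (b : ℝ) < (b' : ℝ) + 2 := by linarith
    have c2 : (b' : ℝ) < (b : ℝ) + 2 := by linarith
    have c1' : b < b' + 2 := by exact_mod_cast c1
    have c2' : b' < b + 2 := by exact_mod_cast c2
    omega
  rcases hdb with h | h | h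
  · -- b' = b + 1, partner must be a' = a + 1
    refine Or.inr (Or.inr ⟨?_, by omega⟩)
    by_contra hne
    have hα2 : α * (b' : ℝ) = α * (b : ℝ) + α := by
      have e : (b' : ℝ) = (b : ℝ) + 1 := by exact_mod_cast (by omega : b' = b + 1)
      rw [e]; ring
    rcases (by omega : a' ≤ a ∨ a + 2 ≤ a') with hc | hc
    · have := hm a' a hc; linarith
    · have := hm (a + 2) a' hc; push_cast at this; linarith
  · refine Or.inl ⟨?_, by omega⟩
    by_contra hne
    have hαb : α * (b' : ℝ) = α * (b : ℝ) := by
      have e : (b' : ℝ) = (b : ℝ) := by exact_mod_cast (by omega : b' = b)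
      rw [e]
    rcases (by omega : a + 1 ≤ a' ∨ a' + 1 ≤ a) with hc | hc
    · have := hm (a + 1) a' hc; push_cast at this; linarith
    · have := hm (a' + 1) a hc; push_cast at this; linarith
  · -- b = b' + 1, partner must be a = a' + 1
    refine Or.inr (Or.inl ⟨?_, by omega⟩)
    by_contra hne
    have hα2 : α * (b : ℝ) = α * (b' : ℝ) + α := by
      have e : (b : ℝ) = (b' : ℝ) + 1 := by exact_mod_cast (by omega : b = b' + 1)
      rw [e]; ring
    rcases (by omega : a ≤ a' ∨ a' + 2 ≤ a) with hc | hc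
    · have := hm a a' hc; linarith
    · have := hm (a' + 2) a hc; push_cast at this; linarith
end Core

section Core2
variable {α β : ℝ} {a b a' b' : ℤ} {s u w : ℝ}

/-- An L-window at `(a,b)` and an R-window at `(a',b')` sharing a point: allowed offsets,
given the parity constraint satisfied by all pieces. -/
lemma core_LR (hα : 0 < α) (hβ0 : 0 < β) (hβ : β < α / 3)
    (hE : Even (a + b)) (hE' : Even (a' + b'))
    (hb1 : (b : ℝ) ≤ s) (hb2 : s ≤ (b : ℝ) + 1 + β / α)
    (hu1 : (a : ℝ) * (α - β) + α * b + β / 2 ≤ u)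
    (hu2 : u ≤ (a : ℝ) * (α - β) + α * b + 3 * β / 2)
    (hb1' : (b' : ℝ) ≤ s) (hb2' : s ≤ (b' : ℝ) + 1 + β / α)
    (hw1 : (a' : ℝ) * (α - β) - α * b' - 3 * β / 2 ≤ w)
    (hw2 : w ≤ (a' : ℝ) * (α - β) - α * b' - β / 2)
    (huw : u - w = 2 * α * s) :
    (a - a' = 0 ∧ b - b' = 0) ∨ (a - a' = 2 ∧ b - b' = 0) ∨
      (a - a' = 1 ∧ b - b' = 1) ∨ (a - a' = 1 ∧ b - b' = -1) := by
  have hβα : β / α < 1 := by rw [div_lt_one hα]; linarith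
  have hab : (0 : ℝ) < α - β := by linarith
  have h2α : (0 : ℝ) ≤ 2 * α := by linarith
  have he : α * (β / α) = β := by field_simp
  have hm : ∀ x y : ℤ, x ≤ y → (x : ℝ) * (α - β) ≤ (y : ℝ) * (α - β) := fun x y h =>
    mul_le_mul_of_nonneg_right (by exact_mod_cast h) hab.le
  have S1 : 2 * α * (b : ℝ) ≤ 2 * α * s := mul_le_mul_of_nonneg_left hb1 h2α
  have S1' : 2 * α * (b' : ℝ) ≤ 2 * α * s := mul_le_mul_of_nonneg_left hb1' h2α
  have S2 : 2 * α * s ≤ 2 * α * (b : ℝ) + 2 * α + 2 * β := by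
    have := mul_le_mul_of_nonneg_left hb2 h2α
    nlinarith [he]
  have S2' : 2 * α * s ≤ 2 * α * (b' : ℝ) + 2 * α + 2 * β := by
    have := mul_le_mul_of_nonneg_left hb2' h2α
    nlinarith [he]
  have hdb : b - b' = -1 ∨ b - b' = 0 ∨ b - b' = 1 := by
    have c1 : (b : ℝ) < (b' : ℝ) + 2 := by linarith
    have c2 : (b' : ℝ) < (b : ℝ) + 2 := by linarith
    have c1' : b < b' + 2 := by exact_mod_cast c1
    have c2' : b' < b + 2 := by exact_mod_cast c2
    omega
  rw [Int.even_iff] at hE hE'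
  rcases hdb with h | h | h
  · -- b' = b + 1 : claim a - a' = 1
    refine Or.inr (Or.inr (Or.inr ⟨?_, by omega⟩))
    by_contra hne
    have hα2 : α * (b' : ℝ) = α * (b : ℝ) + α := by
      have e : (b' : ℝ) = (b : ℝ) + 1 := by exact_mod_cast (by omega : b' = b + 1)
      rw [e]; ring
    rcases (by omega : a ≤ a' - 1 ∨ a' + 3 ≤ a) with hc | hc
    · have := hm a (a' - 1) hc; push_cast at this; linarith
    · have := hm (a' + 3) a hc; push_cast at this; linarith
  · -- b' = b : claim a - a' ∈ {0, 2}
    have hpar : (a - a') % 2 = 0 := by omega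
    rcases (by omega : a - a' = 0 ∨ a - a' = 2 ∨ a ≤ a' - 2 ∨ a' + 4 ≤ a) with hc | hc | hc | hc
    · exact Or.inl ⟨hc, by omega⟩
    · exact Or.inr (Or.inl ⟨hc, by omega⟩)
    · exfalso
      have hα2 : α * (b' : ℝ) = α * (b : ℝ) := by
        have e : (b' : ℝ) = (b : ℝ) := by exact_mod_cast (by omega : b' = b)
        rw [e]
      have := hm a (a' - 2) hc; push_cast at this; linarith
    · exfalso
      have hα2 : α * (b' : ℝ) = α * (b : ℝ) := by
        have e : (b' : ℝ) = (b : ℝ) := by exact_mod_cast (by omega : b' = b)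
        rw [e]
      have := hm (a' + 4) a hc; push_cast at this; linarith
  · -- b = b' + 1 : claim a - a' = 1
    refine Or.inr (Or.inr (Or.inl ⟨?_, by omega⟩))
    by_contra hne
    have hα2 : α * (b : ℝ) = α * (b' : ℝ) + α := by
      have e : (b : ℝ) = (b' : ℝ) + 1 := by exact_mod_cast (by omega : b = b' + 1)
      rw [e]; ring
    rcases (by omega : a ≤ a' - 1 ∨ a' + 3 ≤ a) with hc | hc
    · have := hm a (a' - 1) hc; push_cast at this; linarith
    · have := hm (a' + 3) a hc; push_cast at this; linarith

/-- A small piece at level `b` cannot meet a piece at a higher level. -/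
lemma core_height (hα : 0 < α) (hβ0 : 0 < β) (hβ : β < α / 3)
    (h1 : s ≤ (b : ℝ) + 3 * β / (2 * α)) (h2 : (b' : ℝ) ≤ s) : b' ≤ b := by
  have h3 : 3 * β / (2 * α) < 1 := by
    rw [div_lt_one (by linarith)]; linarith
  have h4 : (b' : ℝ) < (b : ℝ) + 1 := by linarith
  have h5 : b' < b + 1 := by exact_mod_cast h4
  omega

/-- When one of the two crossing pieces is small, the offset `(2,0)` is excluded:
an L-window at `(a'+2, b)` cannot meet an R-window at `(a', b)` at a point of
height `s ≤ b + 3β/(2α)`. -/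
lemma core_cross (hα : 0 < α) (hβ0 : 0 < β) (hβ : β < α / 3)
    (hs : s ≤ (b : ℝ) + 3 * β / (2 * α))
    (hu1 : (a : ℝ) * (α - β) + α * b + β / 2 ≤ u)
    (hw2 : w ≤ (a' : ℝ) * (α - β) - α * b - β / 2)
    (huw : u - w = 2 * α * s) (haa : a = a' + 2) : False := by
  have hab : (0 : ℝ) < α - β := by linarith
  have h2α : (0 : ℝ) ≤ 2 * α := by linarith
  have he2 : 2 * α * (3 * β / (2 * α)) = 3 * β := by
    field_simp
  have hS : 2 * α * s ≤ 2 * α * (b : ℝ) + 3 * β := by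
    have := mul_le_mul_of_nonneg_left hs h2α
    nlinarith [he2]
  have ha : (a : ℝ) = (a' : ℝ) + 2 := by exact_mod_cast haa
  rw [ha] at hu1
  linarith

end Core2

-- ===== integer combinatorics =====

/-- Quantifier-free description of the (superset of) piece indices of `Y00`,
in local coordinates.  `isL` records whether the piece is an L- or R-piece;
`sm` whether it is small. -/
def InQ (ℓ d x y : ℤ) (isL sm : Bool) : Prop :=
  (isL = false ∧ sm = false ∧ 0 ≤ x ∧ x ≤ ℓ ∧ y = x) ∨
  (isL = true ∧ sm = true ∧ 1 ≤ x ∧ x ≤ ℓ ∧ y = x) ∨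
  (isL = true ∧ sm = false ∧ x + y = 2 * ℓ ∧ ℓ - d ≤ x ∧ x ≤ ℓ) ∨
  (isL = false ∧ sm = true ∧ x + y = 2 * ℓ ∧ ℓ - d ≤ x ∧ x ≤ ℓ - 1) ∨
  (isL = true ∧ sm = false ∧ x + y = 2 * ℓ + 2 ∧ ℓ + 2 - d ≤ x ∧ x ≤ ℓ + 1) ∨
  (isL = false ∧ sm = true ∧ x + y = 2 * ℓ + 2 ∧ ℓ + 2 - d ≤ x ∧ x ≤ ℓ + 1)

/-- The possible offsets between two pieces (in total coordinates) sharing a point,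
as established by the contact core lemmas. -/
def CRel (isL₁ isL₂ : Bool) (da db : ℤ) : Prop :=
  match isL₁, isL₂ with
  | true, true => (da = 0 ∧ db = 0) ∨ (da = 1 ∧ db = -1) ∨ (da = -1 ∧ db = 1)
  | false, false => (da = 0 ∧ db = 0) ∨ (da = 1 ∧ db = 1) ∨ (da = -1 ∧ db = -1)
  | true, false => (da = 0 ∧ db = 0) ∨ (da = 2 ∧ db = 0) ∨ (da = 1 ∧ db = 1) ∨ (da = 1 ∧ db = -1)
  | false, true => (da = 0 ∧ db = 0) ∨ (da = -2 ∧ db = 0) ∨ (da = -1 ∧ db = -1) ∨ (da = -1 ∧ db = 1)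

lemma InQ_even {ℓ d x y : ℤ} {isL sm : Bool} (h : InQ ℓ d x y isL sm) : Even (x + y) := by
  rw [Int.even_iff]
  rcases h with h | h | h | h | h | h <;> omega

lemma InQ_ybounds {ℓ d x y : ℤ} {isL sm : Bool} (hℓ : 2 ≤ ℓ) (hd0 : 0 ≤ d) (hd : d < ℓ)
    (h : InQ ℓ d x y isL sm) : 0 ≤ y ∧ y ≤ ℓ + d := by
  rcases h with h | h | h | h | h | h <;> omega

lemma Rel_bounds {isL₁ isL₂ : Bool} {da db : ℤ} (h : CRel isL₁ isL₂ da db) :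
    -1 ≤ db ∧ db ≤ 1 := by
  cases isL₁ <;> cases isL₂ <;> simp only [CRel] at h <;> omega

lemma Kfact (S y₁ y₂ db K : ℤ) (hS : 3 ≤ S) (hy₁ : 0 ≤ y₁ ∧ y₁ ≤ S - 1)
    (hy₂ : 0 ≤ y₂ ∧ y₂ ≤ S - 1) (hdb : -1 ≤ db ∧ db ≤ 1)
    (heq : db = y₁ - y₂ + K * S) : K = -1 ∨ K = 0 ∨ K = 1 := by
  rcases le_or_gt K (-2) with h | h
  · exfalso
    have : K * S ≤ (-2) * S := mul_le_mul_of_nonneg_right h (by omega)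
    omega
  rcases le_or_gt 2 K with h2 | h2
  · exfalso
    have : 2 * S ≤ K * S := mul_le_mul_of_nonneg_right h2 (by omega)
    omega
  · omega

/-- The integer endgame: two pieces of two far-apart copies of `Y00` cannot satisfy
any of the contact relations. -/
lemma endgame (ℓ d j k j' k' : ℤ) (hℓ : 2 ≤ ℓ) (hd0 : 0 ≤ d) (hd : d < ℓ)
    (hfar : 2 < |j - j'| + |k - k'|)
    (x₁ y₁ x₂ y₂ a₁ b₁ a₂ b₂ : ℤ) (isL₁ sm₁ isL₂ sm₂ : Bool)
    (hQ₁ : InQ ℓ d x₁ y₁ isL₁ sm₁) (hQ₂ : InQ ℓ d x₂ y₂ isL₂ sm₂)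
    (ha₁ : a₁ = x₁ + (k * (ℓ - d) + j)) (hb₁ : b₁ = y₁ + k * (ℓ + d + 1))
    (ha₂ : a₂ = x₂ + (k' * (ℓ - d) + j')) (hb₂ : b₂ = y₂ + k' * (ℓ + d + 1))
    (hH₁ : sm₁ = true → b₂ ≤ b₁) (hH₂ : sm₂ = true → b₁ ≤ b₂)
    (hX₁ : isL₁ = true → isL₂ = false → (sm₁ = true ∨ sm₂ = true) →
      ¬(b₁ = b₂ ∧ a₁ = a₂ + 2))
    (hX₂ : isL₁ = false → isL₂ = true → (sm₁ = true ∨ sm₂ = true) →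
      ¬(b₁ = b₂ ∧ a₂ = a₁ + 2))
    (hrel : CRel isL₁ isL₂ (a₁ - a₂) (b₁ - b₂)) : False := by
  have hy₁ := InQ_ybounds hℓ hd0 hd hQ₁
  have hy₂ := InQ_ybounds hℓ hd0 hd hQ₂
  have hdb := Rel_bounds hrel
  have heq : b₁ - b₂ = y₁ - y₂ + (k - k') * (ℓ + d + 1) := by
    rw [hb₁, hb₂]; ring
  have hK : k - k' = -1 ∨ k - k' = 0 ∨ k - k' = 1 :=
    Kfact (ℓ + d + 1) y₁ y₂ (b₁ - b₂) (k - k') (by omega) (by omega) (by omega) hdb heq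
  have hda : a₁ - a₂ = x₁ - x₂ + (k - k') * (ℓ - d) + (j - j') := by
    rw [ha₁, ha₂]; ring
  rw [Int.abs_eq_natAbs, Int.abs_eq_natAbs] at hfar
  clear ha₁ ha₂ hb₁ hb₂
  rcases hK with hK | hK | hK <;>
    rw [hK] at heq hda <;>
  · have hkk : k - k' = _ := hK
    cases isL₁ <;> cases isL₂ <;> cases sm₁ <;> cases sm₂ <;>
      simp only [CRel, Bool.true_eq_false, Bool.false_eq_true, false_and, true_and, false_or,
        or_false, forall_const, false_implies, true_implies, false_or, or_self,
        not_and] at hrel hH₁ hH₂ hX₁ hX₂ hQ₁ hQ₂ ⊢ <;>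
      rcases hQ₁ with h | h | h | h | h | h <;> rcases hQ₂ with h' | h' | h' | h' | h' | h' <;>
      simp only [InQ, Bool.true_eq_false, Bool.false_eq_true, false_and, true_and,
        false_or, or_false] at h h' <;>
      omega

lemma height_of_Ls {α β M : ℝ} {a b : ℤ} {p : ℝ × ℝ} (h : p ∈ Lsjk α β M a b) :
    p.2 ≤ M * b + 3 * M * β / (2 * α) := by
  obtain ⟨q, ⟨h1, h2, h3, h4⟩, rfl⟩ := h
  simp only [vjk, Prod.snd_add]
  linarith

lemma height_of_Rs {α β M : ℝ} {a b : ℤ} {p : ℝ × ℝ} (h : p ∈ Rsjk α β M a b) :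
    p.2 ≤ M * b + 3 * M * β / (2 * α) := by
  obtain ⟨q, ⟨h1, h2, h3, h4⟩, rfl⟩ := h
  simp only [vjk, Prod.snd_add]
  linarith

lemma mem_Yjk_decomp {α β M : ℝ} (hα : 0 < α) (hβ0 : 0 < β) (hβ : β < α / 3) (hM : 0 < M)
    {ℓ d j k : ℤ} (hℓ : 2 ≤ ℓ) (hd0 : 0 ≤ d) {p : ℝ × ℝ}
    (hp : p ∈ Yjk α β M ℓ d j k) :
    ∃ (a b : ℤ) (isL sm : Bool),
      (isL = true → p ∈ Ljk α β M a b) ∧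
      (isL = false → p ∈ Rjk α β M a b) ∧
      (sm = true → p.2 ≤ M * b + 3 * M * β / (2 * α)) ∧
      InQ ℓ d (a - (k * (ℓ - d) + j)) (b - k * (ℓ + d + 1)) isL sm := by
  have hv : (M * ((k * (ℓ - d) + j : ℤ) : ℝ) * (α - β), M * (k : ℝ) * ((ℓ + d + 1 : ℤ) : ℝ))
      = vjk α β M (k * (ℓ - d) + j) (k * (ℓ + d + 1)) := by
    simp only [vjk, Prod.mk.injEq]
    constructor <;> push_cast <;> ring
  rw [Yjk, hv] at hp
  obtain ⟨q, hq, rfl⟩ := hp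
  set A := k * (ℓ - d) + j with hA
  set B := k * (ℓ + d + 1) with hB
  have memL : ∀ a b : ℤ, q ∈ Ljk α β M a b →
      vjk α β M A B + q ∈ Ljk α β M (A + a) (B + b) := fun a b h => by
    rw [← shift_Ljk]; exact ⟨q, h, rfl⟩
  have memR : ∀ a b : ℤ, q ∈ Rjk α β M a b →
      vjk α β M A B + q ∈ Rjk α β M (A + a) (B + b) := fun a b h => by
    rw [← shift_Rjk]; exact ⟨q, h, rfl⟩
  have memLs : ∀ a b : ℤ, q ∈ Lsjk α β M a b →
      vjk α β M A B + q ∈ Lsjk α β M (A + a) (B + b) := fun a b h => by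
    rw [← shift_Lsjk]; exact ⟨q, h, rfl⟩
  have memRs : ∀ a b : ℤ, q ∈ Rsjk α β M a b →
      vjk α β M A B + q ∈ Rsjk α β M (A + a) (B + b) := fun a b h => by
    rw [← shift_Rsjk]; exact ⟨q, h, rfl⟩
  clear_value A B
  rcases hq with ((((hq | hq) | hq) | hq) | hq) | hq
  · -- bigR
    have h0 : q ∈ Rjk α β M 0 0 := ⟨q, hq, by simp [vjk]⟩
    exact ⟨A + 0, B + 0, false, false, fun h => Bool.noConfusion h, fun _ => memR 0 0 h0,
      fun h => Bool.noConfusion h, Or.inl ⟨rfl, rfl, by omega, by omega, by omega⟩⟩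
  · -- diagonal Rjk i i ∪ Lsjk i i
    simp only [Set.mem_iUnion, Finset.mem_Icc, Set.mem_union, exists_prop] at hq
    obtain ⟨i, ⟨hi1, hi2⟩, hq | hq⟩ := hq
    · exact ⟨A + i, B + i, false, false, fun h => Bool.noConfusion h, fun _ => memR i i hq,
        fun h => Bool.noConfusion h, Or.inl ⟨rfl, rfl, by omega, by omega, by omega⟩⟩
    · exact ⟨A + i, B + i, true, true,
        fun _ => Lsjk_subset α β M hα hβ0 hβ hM _ _ (memLs i i hq),
        fun h => Bool.noConfusion h, fun _ => height_of_Ls (memLs i i hq),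
        Or.inr (Or.inl ⟨rfl, rfl, by omega, by omega, by omega⟩)⟩
  · -- Ljk ℓ ℓ
    exact ⟨A + ℓ, B + ℓ, true, false, fun _ => memL ℓ ℓ hq, fun h => Bool.noConfusion h,
      fun h => Bool.noConfusion h, Or.inr (Or.inr (Or.inl ⟨rfl, rfl, by omega, by omega, by omega⟩))⟩
  · -- if 1 ≤ d : Ljk (ℓ+1) (ℓ+1)
    split_ifs at hq with h1d
    · exact ⟨A + (ℓ + 1), B + (ℓ + 1), true, false, fun _ => memL _ _ hq,
        fun h => Bool.noConfusion h, fun h => Bool.noConfusion h,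
        Or.inr (Or.inr (Or.inr (Or.inr (Or.inl ⟨rfl, rfl, by omega, by omega, by omega⟩))))⟩
    · exact absurd hq (Set.notMem_empty q)
  · -- if d = 1 : Ljk (ℓ-1) (ℓ+1) ∪ Rsjk (ℓ-1) (ℓ+1)
    split_ifs at hq with hd1
    · rcases hq with hq | hq
      · exact ⟨A + (ℓ - 1), B + (ℓ + 1), true, false, fun _ => memL _ _ hq,
          fun h => Bool.noConfusion h, fun h => Bool.noConfusion h,
          Or.inr (Or.inr (Or.inl ⟨rfl, rfl, by omega, by omega, by omega⟩))⟩
      · exact ⟨A + (ℓ - 1), B + (ℓ + 1), false, true, fun h => Bool.noConfusion h,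
          fun _ => Rsjk_subset α β M hα hβ0 hβ hM _ _ (memRs _ _ hq),
          fun _ => height_of_Rs (memRs _ _ hq),
          Or.inr (Or.inr (Or.inr (Or.inl ⟨rfl, rfl, by omega, by omega, by omega⟩)))⟩
    · exact absurd hq (Set.notMem_empty q)
  · -- if 2 ≤ d : branch
    split_ifs at hq with h2d
    · rcases hq with (hq | hq) | hq
      · simp only [Set.mem_iUnion, Finset.mem_Ico, Set.mem_union, exists_prop] at hq
        obtain ⟨i, ⟨hi1, hi2⟩, ((hq | hq) | hq) | hq⟩ := hq
        · exact ⟨A + (ℓ - i), B + (ℓ + i), true, false, fun _ => memL _ _ hq,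
            fun h => Bool.noConfusion h, fun h => Bool.noConfusion h,
            Or.inr (Or.inr (Or.inl ⟨rfl, rfl, by omega, by omega, by omega⟩))⟩
        · rcases (by omega : i = 0 ∨ 1 ≤ i) with hi0 | hi0
          · subst hi0
            exact ⟨A + (ℓ - 0), B + (ℓ + 0), false, false, fun h => Bool.noConfusion h,
              fun _ => Rsjk_subset α β M hα hβ0 hβ hM _ _ (memRs _ _ hq),
              fun h => Bool.noConfusion h, Or.inl ⟨rfl, rfl, by omega, by omega, by omega⟩⟩
          · exact ⟨A + (ℓ - i), B + (ℓ + i), false, true, fun h => Bool.noConfusion h,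
              fun _ => Rsjk_subset α β M hα hβ0 hβ hM _ _ (memRs _ _ hq),
              fun _ => height_of_Rs (memRs _ _ hq),
              Or.inr (Or.inr (Or.inr (Or.inl ⟨rfl, rfl, by omega, by omega, by omega⟩)))⟩
        · exact ⟨A + (ℓ + 1 - i), B + (ℓ + 1 + i), true, false, fun _ => memL _ _ hq,
            fun h => Bool.noConfusion h, fun h => Bool.noConfusion h,
            Or.inr (Or.inr (Or.inr (Or.inr (Or.inl ⟨rfl, rfl, by omega, by omega, by omega⟩))))⟩
        · exact ⟨A + (ℓ + 1 - i), B + (ℓ + 1 + i), false, true, fun h => Bool.noConfusion h,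
            fun _ => Rsjk_subset α β M hα hβ0 hβ hM _ _ (memRs _ _ hq),
            fun _ => height_of_Rs (memRs _ _ hq),
            Or.inr (Or.inr (Or.inr (Or.inr (Or.inr ⟨rfl, rfl, by omega, by omega, by omega⟩))))⟩
      · exact ⟨A + (ℓ - d), B + (ℓ + d), true, false, fun _ => memL _ _ hq,
          fun h => Bool.noConfusion h, fun h => Bool.noConfusion h,
          Or.inr (Or.inr (Or.inl ⟨rfl, rfl, by omega, by omega, by omega⟩))⟩
      · exact ⟨A + (ℓ - d), B + (ℓ + d), false, true, fun h => Bool.noConfusion h,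
          fun _ => Rsjk_subset α β M hα hβ0 hβ hM _ _ (memRs _ _ hq),
          fun _ => height_of_Rs (memRs _ _ hq),
          Or.inr (Or.inr (Or.inr (Or.inl ⟨rfl, rfl, by omega, by omega, by omega⟩)))⟩
    · exact absurd hq (Set.notMem_empty q)

lemma even_ab {j k ℓ d a b x y : ℤ} (hjk : Even (j + k)) (hxy : Even (x + y))
    (hx : x = a - (k * (ℓ - d) + j)) (hy : y = b - k * (ℓ + d + 1)) : Even (a + b) := by
  obtain ⟨m, hm⟩ := hjk
  obtain ⟨n, hn⟩ := hxy
  exact ⟨n + k * ℓ + m, by rw [hx, hy] at hn; linear_combination hn + hm⟩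


/-- If `(j,k), (j',k') ∈ 𝕃` satisfy `|j−j'| + |k−k'| > 2`, then the regions `Y_jk` and
`Y_{j'k'}` are disjoint. -/
theorem Yjk_disjoint (α β M : ℝ) (hα : 0 < α) (hβ0 : 0 < β) (hβ : β < α / 3) (hM : 0 < M)
    (ℓ d : ℤ) (hℓ : 2 ≤ ℓ) (hd0 : 0 ≤ d) (hd : d < ℓ)
    (j k j' k' : ℤ) (hk : 0 ≤ k) (hjk : Even (j + k)) (hk' : 0 ≤ k') (hjk' : Even (j' + k'))
    (hfar : 2 < |j - j'| + |k - k'|) :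
    Disjoint (Yjk α β M ℓ d j k) (Yjk α β M ℓ d j' k') := by
  rw [Set.disjoint_left]
  intro p hp hp'
  obtain ⟨a₁, b₁, isL₁, sm₁, hL₁, hR₁, hS₁, hQ₁⟩ :=
    mem_Yjk_decomp hα hβ0 hβ hM hℓ hd0 hp
  obtain ⟨a₂, b₂, isL₂, sm₂, hL₂, hR₂, hS₂, hQ₂⟩ :=
    mem_Yjk_decomp hα hβ0 hβ hM hℓ hd0 hp'
  -- normalized smallness bounds
  have hgen : ∀ b : ℤ, p.2 ≤ M * (b : ℝ) + 3 * M * β / (2 * α) →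
      p.2 / M ≤ (b : ℝ) + 3 * β / (2 * α) := by
    intro b hb
    rw [div_le_iff₀ hM]
    have e : ((b : ℝ) + 3 * β / (2 * α)) * M = M * (b : ℝ) + 3 * M * β / (2 * α) := by
      field_simp
    linarith
  have hS₁' : sm₁ = true → p.2 / M ≤ (b₁ : ℝ) + 3 * β / (2 * α) := fun h => hgen b₁ (hS₁ h)
  have hS₂' : sm₂ = true → p.2 / M ≤ (b₂ : ℝ) + 3 * β / (2 * α) := fun h => hgen b₂ (hS₂ h)
  have huw : (p.1 + α * p.2) / M - (p.1 - α * p.2) / M = 2 * α * (p.2 / M) := by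
    field_simp
    ring
  -- parity facts
  have hE₁ : Even (a₁ + b₁) := even_ab hjk (InQ_even hQ₁) rfl rfl
  have hE₂ : Even (a₂ + b₂) := even_ab hjk' (InQ_even hQ₂) rfl rfl
  -- case on the piece types and derive the contact relation plus side facts
  cases isL₁ <;> cases isL₂
  · -- R vs R
    obtain ⟨n1, n2, n3, n4⟩ := norm_R hα hM (hR₁ rfl)
    obtain ⟨m1, m2, m3, m4⟩ := norm_R hα hM (hR₂ rfl)
    have hrel : CRel false false (a₁ - a₂) (b₁ - b₂) :=
      core_RR hα hβ0 hβ n1 n2 n3 n4 m1 m2 m3 m4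
    have hH₁ : sm₁ = true → b₂ ≤ b₁ := fun h => core_height hα hβ0 hβ (hS₁' h) m1
    have hH₂ : sm₂ = true → b₁ ≤ b₂ := fun h => core_height hα hβ0 hβ (hS₂' h) n1
    exact endgame ℓ d j k j' k' hℓ hd0 hd hfar _ _ _ _ a₁ b₁ a₂ b₂ _ _ _ _ hQ₁ hQ₂
      (by ring) (by ring) (by ring) (by ring) hH₁ hH₂
      (fun h => Bool.noConfusion h) (fun _ h => Bool.noConfusion h) hrel
  · -- R vs L
    obtain ⟨n1, n2, n3, n4⟩ := norm_R hα hM (hR₁ rfl)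
    obtain ⟨m1, m2, m3, m4⟩ := norm_L hα hM (hL₂ rfl)
    have hrel0 := core_LR hα hβ0 hβ hE₂ hE₁ m1 m2 m3 m4 n1 n2 n3 n4 huw
    have hrel : CRel false true (a₁ - a₂) (b₁ - b₂) := by
      simp only [CRel]; omega
    have hH₁ : sm₁ = true → b₂ ≤ b₁ := fun h => core_height hα hβ0 hβ (hS₁' h) m1
    have hH₂ : sm₂ = true → b₁ ≤ b₂ := fun h => core_height hα hβ0 hβ (hS₂' h) n1
    have hX₂ : false = false → true = true → (sm₁ = true ∨ sm₂ = true) →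
        ¬(b₁ = b₂ ∧ a₂ = a₁ + 2) := by
      rintro - - hsm ⟨hbb, haa⟩
      have hbc : (b₁ : ℝ) = (b₂ : ℝ) := by exact_mod_cast hbb
      have hs : p.2 / M ≤ (b₁ : ℝ) + 3 * β / (2 * α) := by
        rcases hsm with h | h
        · exact hS₁' h
        · rw [hbc]; exact hS₂' h
      rw [← hbc] at m3
      exact core_cross hα hβ0 hβ hs m3 n4 huw haa
    exact endgame ℓ d j k j' k' hℓ hd0 hd hfar _ _ _ _ a₁ b₁ a₂ b₂ _ _ _ _ hQ₁ hQ₂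
      (by ring) (by ring) (by ring) (by ring) hH₁ hH₂
      (fun h => Bool.noConfusion h) hX₂ hrel
  · -- L vs R
    obtain ⟨n1, n2, n3, n4⟩ := norm_L hα hM (hL₁ rfl)
    obtain ⟨m1, m2, m3, m4⟩ := norm_R hα hM (hR₂ rfl)
    have hrel : CRel true false (a₁ - a₂) (b₁ - b₂) :=
      core_LR hα hβ0 hβ hE₁ hE₂ n1 n2 n3 n4 m1 m2 m3 m4 huw
    have hH₁ : sm₁ = true → b₂ ≤ b₁ := fun h => core_height hα hβ0 hβ (hS₁' h) m1
    have hH₂ : sm₂ = true → b₁ ≤ b₂ := fun h => core_height hα hβ0 hβ (hS₂' h) n1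
    have hX₁ : true = true → false = false → (sm₁ = true ∨ sm₂ = true) →
        ¬(b₁ = b₂ ∧ a₁ = a₂ + 2) := by
      rintro - - hsm ⟨hbb, haa⟩
      have hbc : (b₁ : ℝ) = (b₂ : ℝ) := by exact_mod_cast hbb
      have hs : p.2 / M ≤ (b₂ : ℝ) + 3 * β / (2 * α) := by
        rcases hsm with h | h
        · rw [← hbc]; exact hS₁' h
        · exact hS₂' h
      rw [hbc] at n3
      exact core_cross hα hβ0 hβ hs n3 m4 huw haa
    exact endgame ℓ d j k j' k' hℓ hd0 hd hfar _ _ _ _ a₁ b₁ a₂ b₂ _ _ _ _ hQ₁ hQ₂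
      (by ring) (by ring) (by ring) (by ring) hH₁ hH₂
      hX₁ (fun h => Bool.noConfusion h) hrel
  · -- L vs L
    obtain ⟨n1, n2, n3, n4⟩ := norm_L hα hM (hL₁ rfl)
    obtain ⟨m1, m2, m3, m4⟩ := norm_L hα hM (hL₂ rfl)
    have hrel : CRel true true (a₁ - a₂) (b₁ - b₂) :=
      core_LL hα hβ0 hβ n1 n2 n3 n4 m1 m2 m3 m4
    have hH₁ : sm₁ = true → b₂ ≤ b₁ := fun h => core_height hα hβ0 hβ (hS₁' h) m1
    have hH₂ : sm₂ = true → b₁ ≤ b₂ := fun h => core_height hα hβ0 hβ (hS₂' h) n1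
    exact endgame ℓ d j k j' k' hℓ hd0 hd hfar _ _ _ _ a₁ b₁ a₂ b₂ _ _ _ _ hQ₁ hQ₂
      (by ring) (by ring) (by ring) (by ring) hH₁ hH₂
      (fun _ h => Bool.noConfusion h) (fun h => Bool.noConfusion h) hrel
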